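/- For all integers k ≥ 0 and b, the identity [2k+2 choose k+1] · Ỹ(k,b) = (−1)^k [2k+1 choose k] · ( [2k+2 choose k+1] + Σ_{n=1}^{k+1} (−1)^n [2k+2 choose k+1−n] (v^n + v^{−n}) q^{b n^2} ) holds in ℤ[v^{±1}]. -/

import Mathlib

noncomputable section

/-- The variable `v`, as a rational function. -/
def v : RatFunc ℚ := RatFunc.X

/-- `{n} = v^n − v^{−n}`. -/
def br (n : ℤ) : RatFunc ℚ := v ^ n - v ^ (-n)

/-- `{n}! = ∏_{i=1}^n {i}`. -/
def brfac (n : ℕ) : RatFunc ℚ := ∏ i ∈ Finset.range n, br (i + 1)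

/-- The balanced Gaussian binomial `[n choose j] = {n}!/({j}!{n−j}!)`. -/
def qbin (n j : ℕ) : RatFunc ℚ := brfac n / (brfac j * brfac (n - j))

/-- `Ỹ(k,b) = Σ_{j=0}^{2k+1} (−1)^j [2k+1 choose j] q^{b(j−k)^2}` with `q = v²`. -/
def Yt (k : ℕ) (b : ℤ) : RatFunc ℚ :=
  ∑ j ∈ Finset.range (2 * k + 2),
    (-1) ^ j * qbin (2 * k + 1) j * (v ^ 2) ^ (b * ((j : ℤ) - (k : ℤ)) ^ 2)

lemma v_ne_zero : v ≠ 0 := RatFunc.X_ne_zero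

lemma v_pow_ne_one (m : ℕ) (hm : m ≠ 0) : v ^ m ≠ 1 := by
  intro h
  have h2 : (algebraMap (Polynomial ℚ) (RatFunc ℚ)) (Polynomial.X ^ m) =
      (algebraMap (Polynomial ℚ) (RatFunc ℚ)) 1 := by
    simpa [map_pow, RatFunc.algebraMap_X, v] using h
  have h3 := RatFunc.algebraMap_injective ℚ h2
  have := congrArg Polynomial.natDegree h3
  simp [Polynomial.natDegree_X_pow] at this
  exact hm this

lemma br_succ_ne_zero (n : ℕ) : br ((n : ℤ) + 1) ≠ 0 := by
  intro h
  have h1 : v ^ ((n : ℤ) + 1) = v ^ (-((n : ℤ) + 1)) := by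
    have := sub_eq_zero.mp h
    simpa [br] using this
  have h2 : v ^ (((n : ℤ) + 1) + ((n : ℤ) + 1)) = 1 := by
    rw [zpow_add₀ v_ne_zero]
    nth_rewrite 2 [h1]
    rw [← zpow_add₀ v_ne_zero]
    rw [add_neg_cancel, zpow_zero]
  have h3 : v ^ (2 * n + 2 : ℕ) = 1 := by
    rw [← zpow_natCast]
    convert h2 using 2
    push_cast; ring
  exact v_pow_ne_one _ (by omega) h3

lemma brfac_ne_zero (n : ℕ) : brfac n ≠ 0 := by
  unfold brfac
  apply Finset.prod_ne_zero_iff.mpr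
  intro i _
  exact br_succ_ne_zero i

lemma brfac_succ (n : ℕ) : brfac (n + 1) = brfac n * br ((n : ℤ) + 1) := by
  unfold brfac
  rw [Finset.prod_range_succ]

lemma br_add_sub (s t : ℤ) : br (s + t) + br (s - t) = (v ^ t + v ^ (-t)) * br s := by
  unfold br
  simp only [zpow_add₀ v_ne_zero, zpow_sub₀ v_ne_zero, neg_add, neg_sub, zpow_neg]
  field_simp
  ring

lemma core (k n : ℕ) (h : n ≤ k) :
    qbin (2*k+2) (k+1) * (qbin (2*k+1) (k-n) + qbin (2*k+1) (k+n)) =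
    qbin (2*k+1) k * qbin (2*k+2) (k+1-n) * (v^(n:ℤ) + v^(-(n:ℤ))) := by
  unfold qbin
  have e1 : 2*k+2-(k+1) = k+1 := by omega
  have e2 : 2*k+1-(k-n) = k+1+n := by omega
  have e3 : 2*k+1-(k+n) = k+1-n := by omega
  have e4 : 2*k+2-(k+1-n) = k+1+n := by omega
  have e5 : 2*k+1-k = k+1 := by omega
  rw [e1, e2, e3, e4, e5]
  have c1 : (((k+n:ℕ):ℤ)+1) = (k:ℤ)+(n:ℤ)+1 := by push_cast; ring
  have c2 : (((k-n:ℕ):ℤ)+1) = (k:ℤ)-(n:ℤ)+1 := by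
    rw [Nat.cast_sub h]
  have f1 : brfac (k+1+n) = brfac (k+n) * br ((k:ℤ)+(n:ℤ)+1) := by
    rw [show k+1+n = (k+n)+1 by ring, brfac_succ, c1]
  have f2 : brfac (k+1-n) = brfac (k-n) * br ((k:ℤ)-(n:ℤ)+1) := by
    rw [show k+1-n = (k-n)+1 by omega, brfac_succ, c2]
  have f3 : brfac (k+1) = brfac k * br ((k:ℤ)+1) := by
    rw [brfac_succ]
  have key : br ((k:ℤ)+(n:ℤ)+1) + br ((k:ℤ)-(n:ℤ)+1)
      = (v^(n:ℤ)+v^(-(n:ℤ))) * br ((k:ℤ)+1) := by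
    have := br_add_sub ((k:ℤ)+1) (n:ℤ)
    rw [show (k:ℤ)+1+(n:ℤ) = (k:ℤ)+(n:ℤ)+1 by ring,
      show (k:ℤ)+1-(n:ℤ) = (k:ℤ)-(n:ℤ)+1 by ring] at this
    exact this
  rw [f1, f2, f3]
  have n1 := brfac_ne_zero k
  have n2 := brfac_ne_zero (k+n)
  have n3 := brfac_ne_zero (k-n)
  have n4 := br_succ_ne_zero k
  have n5 : br ((k:ℤ)+(n:ℤ)+1) ≠ 0 := by rw [← c1]; exact br_succ_ne_zero (k+n)
  have n6 : br ((k:ℤ)-(n:ℤ)+1) ≠ 0 := by rw [← c2]; exact br_succ_ne_zero (k-n)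
  have hv := v_ne_zero
  rw [div_add_div _ _ (mul_ne_zero n3 (mul_ne_zero n2 n5)) (mul_ne_zero n2 (mul_ne_zero n3 n6)),
    div_mul_div_comm, div_mul_div_comm, div_mul_eq_mul_div,
    div_eq_div_iff (by apply_rules [mul_ne_zero]) (by apply_rules [mul_ne_zero])]
  linear_combination (brfac (2*k+2) * brfac (2*k+1) * brfac k^2 * br ((k:ℤ)+1) *
    brfac (k+n)^2 * brfac (k-n)^2 * br ((k:ℤ)+(n:ℤ)+1) * br ((k:ℤ)-(n:ℤ)+1)) * key

lemma brfac_zero : brfac 0 = 1 := Finset.prod_range_zero _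

lemma qbin_self (m : ℕ) : qbin m m = 1 := by
  unfold qbin
  rw [Nat.sub_self, brfac_zero, mul_one, div_self (brfac_ne_zero m)]

lemma qbin_zero (m : ℕ) : qbin m 0 = 1 := by
  unfold qbin
  rw [Nat.sub_zero, brfac_zero, one_mul, div_self (brfac_ne_zero m)]

lemma qbin_top (k : ℕ) :
    qbin (2*k+2) (k+1) = qbin (2*k+1) k * (v^(((k:ℤ)+1)) + v^(-((k:ℤ)+1))) := by
  unfold qbin
  have e1 : 2*k+2-(k+1) = k+1 := by omega
  have e5 : 2*k+1-k = k+1 := by omega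
  rw [e1, e5]
  have f3 : brfac (k+1) = brfac k * br ((k:ℤ)+1) := brfac_succ k
  have f4 : brfac (2*k+2) = brfac (2*k+1) * br (2*(k:ℤ)+2) := by
    rw [show 2*k+2 = (2*k+1)+1 by ring, brfac_succ]
    push_cast; ring_nf
  have key : br (2*(k:ℤ)+2) = (v^((k:ℤ)+1) + v^(-((k:ℤ)+1))) * br ((k:ℤ)+1) := by
    have := br_add_sub ((k:ℤ)+1) ((k:ℤ)+1)
    have hz : br ((k:ℤ)+1-((k:ℤ)+1)) = 0 := by
      rw [show (k:ℤ)+1-((k:ℤ)+1) = 0 by ring]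
      simp [br]
    rw [hz, add_zero, show (k:ℤ)+1+((k:ℤ)+1) = 2*(k:ℤ)+2 by ring] at this
    exact this
  rw [f3, f4, key]
  have n1 := brfac_ne_zero k
  have n4 := br_succ_ne_zero k
  have n2 := brfac_ne_zero (2*k+1)
  field_simp

/-- For all integers `k ≥ 0` and `b`, one has
`[2k+2 choose k+1]·Ỹ(k,b) = (−1)^k [2k+1 choose k]·([2k+2 choose k+1] +
Σ_{n=1}^{k+1} (−1)^n [2k+2 choose k+1−n](v^n + v^{−n}) q^{b n²})`. -/
theorem Yt_symmetrized_identity (k : ℕ) (b : ℤ) :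
    qbin (2 * k + 2) (k + 1) * Yt k b =
      (-1) ^ k * qbin (2 * k + 1) k *
        (qbin (2 * k + 2) (k + 1) +
          ∑ n ∈ Finset.Icc 1 (k + 1),
            (-1) ^ n * qbin (2 * k + 2) (k + 1 - n) * (v ^ (n : ℤ) + v ^ (-(n : ℤ))) *
              (v ^ 2) ^ (b * (n : ℤ) ^ 2)) := by
  set T : ℕ → RatFunc ℚ := fun j =>
    (-1) ^ j * qbin (2 * k + 1) j * (v ^ 2) ^ (b * ((j : ℤ) - (k : ℤ)) ^ 2) with hT
  set G : ℕ → RatFunc ℚ := fun n =>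
    (-1) ^ n * qbin (2 * k + 2) (k + 1 - n) * (v ^ (n : ℤ) + v ^ (-(n : ℤ))) *
      (v ^ 2) ^ (b * (n : ℤ) ^ 2) with hG
  have hYt : Yt k b = ∑ j ∈ Finset.range (2 * k + 2), T j := rfl
  set Q : RatFunc ℚ := qbin (2 * k + 2) (k + 1) with hQ
  set C : RatFunc ℚ := (-1) ^ k * qbin (2 * k + 1) k with hC
  -- split LHS sum
  have split1 : ∑ j ∈ Finset.range (2 * k + 2), T j =
      (∑ i ∈ Finset.range (k + 1), T (k - i)) +
      (∑ i ∈ Finset.range (k + 1), T (k + 1 + i)) := by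
    rw [show 2 * k + 2 = (k + 1) + (k + 1) by ring, Finset.sum_range_add]
    congr 1
    rw [← Finset.sum_range_reflect]
    simp only [Nat.add_sub_cancel]
  have splitL : ∑ i ∈ Finset.range (k + 1), T (k - i) =
      T k + ∑ i ∈ Finset.range k, T (k - (i + 1)) := by
    rw [Finset.sum_range_succ', Nat.sub_zero, add_comm]
  have splitR : ∑ i ∈ Finset.range (k + 1), T (k + 1 + i) =
      (∑ i ∈ Finset.range k, T (k + 1 + i)) + T (2 * k + 1) := by
    rw [Finset.sum_range_succ]
    congr 2
    omega
  -- split RHS sum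
  have split2 : ∑ n ∈ Finset.Icc 1 (k + 1), G n =
      (∑ i ∈ Finset.range k, G (i + 1)) + G (k + 1) := by
    rw [← Finset.Ico_add_one_right_eq_Icc, Finset.sum_Ico_eq_sum_range]
    have h1 : k + 1 + 1 - 1 = k + 1 := by omega
    rw [h1, Finset.sum_range_succ]
    congr 1
    · apply Finset.sum_congr rfl
      intro i _
      congr 1
      omega
    · congr 1
      omega
  -- term identities
  have hA : Q * T k = C * Q := by
    have h2 : T k = C := by
      rw [hT, hC]
      simp only []
      rw [show b * ((k : ℤ) - (k : ℤ)) ^ 2 = 0 by ring, zpow_zero, mul_one]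
    rw [h2, mul_comm]
  have hB : Q * T (2 * k + 1) = C * G (k + 1) := by
    rw [hT, hC, hG, hQ]
    simp only []
    rw [qbin_self, Nat.sub_self, qbin_zero]
    rw [show b * (((2 * k + 1 : ℕ) : ℤ) - (k : ℤ)) ^ 2 = b * (((k + 1 : ℕ) : ℤ)) ^ 2 by
      push_cast; ring]
    rw [show ((k + 1 : ℕ) : ℤ) = (k : ℤ) + 1 by push_cast; ring]
    rw [qbin_top k]
    rw [show ((-1 : RatFunc ℚ)) ^ (2 * k + 1) = (-1) ^ k * (-1) ^ (k + 1) by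
      rw [← pow_add]; congr 1; omega]
    ring
  have hMid : ∀ i ∈ Finset.range k,
      Q * (T (k - (i + 1)) + T (k + 1 + i)) = C * G (i + 1) := by
    intro i hi
    have hik : i + 1 ≤ k := by
      simp only [Finset.mem_range] at hi; omega
    set n := i + 1 with hn
    have hcast : ((k - n : ℕ) : ℤ) = (k : ℤ) - (n : ℤ) := Nat.cast_sub hik
    have hsign : ((-1 : RatFunc ℚ)) ^ (k - n) = (-1) ^ (k + n) := by
      rw [show k + n = (k - n) + 2 * n by omega, pow_add, pow_mul]
      simp
    have hexp1 : b * (((k - n : ℕ) : ℤ) - (k : ℤ)) ^ 2 = b * ((n : ℤ)) ^ 2 := by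
      rw [hcast]; ring
    have hexp2 : b * (((k + n : ℕ) : ℤ) - (k : ℤ)) ^ 2 = b * ((n : ℤ)) ^ 2 := by
      push_cast; ring
    have hidx : k + 1 + i = k + n := by omega
    rw [hT, hG, hQ]
    simp only []
    rw [hidx, hexp1, hexp2, hsign]
    have hcore := core k n (by omega)
    calc qbin (2*k+2) (k+1) *
          ((-1) ^ (k + n) * qbin (2 * k + 1) (k - n) * (v ^ 2) ^ (b * (n : ℤ) ^ 2)
            + (-1) ^ (k + n) * qbin (2 * k + 1) (k + n) * (v ^ 2) ^ (b * (n : ℤ) ^ 2))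
        = ((-1:RatFunc ℚ)) ^ (k + n) * (v ^ 2) ^ (b * (n : ℤ) ^ 2) *
          (qbin (2*k+2) (k+1) * (qbin (2 * k + 1) (k - n) + qbin (2 * k + 1) (k + n))) := by
          ring
      _ = ((-1:RatFunc ℚ)) ^ (k + n) * (v ^ 2) ^ (b * (n : ℤ) ^ 2) *
          (qbin (2 * k + 1) k * qbin (2 * k + 2) (k + 1 - n) * (v ^ (n : ℤ) + v ^ (-(n : ℤ)))) := by
          rw [hcore]
      _ = C * ((-1) ^ n * qbin (2 * k + 2) (k + 1 - n) * (v ^ (n : ℤ) + v ^ (-(n : ℤ))) *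
            (v ^ 2) ^ (b * (n : ℤ) ^ 2)) := by
          rw [hC, pow_add]; ring
  have hSum : ∑ i ∈ Finset.range k, Q * (T (k - (i + 1)) + T (k + 1 + i)) =
      ∑ i ∈ Finset.range k, C * G (i + 1) := Finset.sum_congr rfl hMid
  have hSum' : (∑ i ∈ Finset.range k, Q * T (k - (i + 1))) +
      (∑ i ∈ Finset.range k, Q * T (k + 1 + i)) =
      ∑ i ∈ Finset.range k, C * G (i + 1) := by
    rw [← Finset.sum_add_distrib]
    simpa [mul_add] using hSum
  rw [hYt, split1, splitL, splitR, split2]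
  simp only [mul_add, Finset.mul_sum]
  linear_combination hA + hB + hSum'

end
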